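/- Let p be any polynomial with complex coefficients and n ∈ ℕ. Then for j ∈ {1, 2} and every 0 ≤ k ≤ n−1, I_0(x^k Q_n[p](x) e^{−x³}) + I_j(x^k Q_n[p](x) e^{−x³}) = 0. In other words, the polynomial Q_n[p] is orthogonal to x^k for k = 0, …, n−1 with respect to the weight e^{−x³} on either of the contours Γ_0 ∪ Γ_1 and Γ_0 ∪ Γ_2. -/

import Mathlib

/-- The primitive third root of unity `ω = exp(2πi/3)`. -/
noncomputable def ω : ℂ := Complex.exp (2 * Real.pi * Complex.I / 3)

/-- Integral over the ray `Γ₀ = [0,∞)`. -/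
noncomputable def I0 (f : ℂ → ℂ) : ℂ := ∫ t in Set.Ioi (0 : ℝ), f t

/-- Integral over the ray `Γ₁ = ω·[0,∞)`, oriented towards the origin. -/
noncomputable def I1 (f : ℂ → ℂ) : ℂ := -ω * ∫ t in Set.Ioi (0 : ℝ), f (ω * t)

/-- Integral over the ray `Γ₂ = ω²·[0,∞)`, oriented towards the origin. -/
noncomputable def I2 (f : ℂ → ℂ) : ℂ := -ω ^ 2 * ∫ t in Set.Ioi (0 : ℝ), f (ω ^ 2 * t)

/-- `Q n p x = (−1)ⁿ 3⁻ⁿ e^{x³} (d/dx)ⁿ (e^{−x³} p(x))`. -/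
noncomputable def Q (n : ℕ) (p : Polynomial ℂ) : ℂ → ℂ := fun x =>
  (-1) ^ n / 3 ^ n * Complex.exp (x ^ 3) *
    iteratedDeriv n (fun z => Complex.exp (-z ^ 3) * p.eval z) x

open Polynomial MeasureTheory Filter Set Topology Asymptotics

noncomputable def Rp (p : Polynomial ℂ) : ℕ → Polynomial ℂ
  | 0 => p
  | m+1 => derivative (Rp p m) - C 3 * X^2 * Rp p m

lemma hasDerivAt_ec (q : Polynomial ℂ) (z : ℂ) :
    HasDerivAt (fun w => Complex.exp (-w^3) * q.eval w)
      (Complex.exp (-z^3) * (derivative q - C 3 * X^2 * q).eval z) z := by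
  have h1 : HasDerivAt (fun w : ℂ => -w^3) (-(3*z^2)) z := by
    simpa using (hasDerivAt_pow 3 z).fun_neg
  have h3 : HasDerivAt (fun w => q.eval w) ((derivative q).eval z) z := q.hasDerivAt z
  have := (h1.cexp).fun_mul h3
  refine this.congr_deriv ?_
  simp only [Polynomial.eval_sub, Polynomial.eval_mul, Polynomial.eval_pow, Polynomial.eval_C,
    Polynomial.eval_X]
  ring

lemma iteratedDeriv_eq (p : Polynomial ℂ) (m : ℕ) :
    iteratedDeriv m (fun z => Complex.exp (-z^3) * p.eval z)
      = fun z => Complex.exp (-z^3) * (Rp p m).eval z := by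
  induction m with
  | zero => simp [Rp]
  | succ m ih =>
    rw [iteratedDeriv_succ, ih]
    funext z
    exact (hasDerivAt_ec (Rp p m) z).deriv

lemma tendsto_aux (i : ℕ) : Tendsto (fun t : ℝ => t^i * Real.exp (t - t^3)) atTop (𝓝 0) := by
  apply squeeze_zero' ?_ ?_ (Real.tendsto_pow_mul_exp_neg_atTop_nhds_zero i)
  · filter_upwards [eventually_ge_atTop (0:ℝ)] with t ht; positivity
  · filter_upwards [eventually_ge_atTop (2:ℝ)] with t ht
    have h : t - t^3 ≤ -t := by nlinarith [sq_nonneg (t - 1), sq_nonneg t]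
    have := Real.exp_le_exp.2 h
    have ht0 : (0:ℝ) ≤ t^i := by positivity
    nlinarith [Real.exp_pos (t - t^3), Real.exp_pos (-t)]

lemma tendsto_poly (s : Polynomial ℂ) (a : ℂ) :
    Tendsto (fun t : ℝ => (Real.exp (t - t^3) : ℂ) * s.eval (a * t)) atTop (𝓝 0) := by
  induction s using Polynomial.induction_on' with
  | add u v hu hv => simpa [mul_add] using hu.add hv
  | monomial i c =>
    have h1 := ((Complex.continuous_ofReal.tendsto 0).comp (tendsto_aux i)).const_mul (c * a^i)
    rw [Complex.ofReal_zero, mul_zero] at h1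
    refine h1.congr fun t => ?_
    simp only [Function.comp_apply, Polynomial.eval_monomial]
    push_cast
    ring

noncomputable def Sp (p : Polynomial ℂ) (n k : ℕ) : Polynomial ℂ :=
  ∑ m ∈ Finset.range n, ((-1:ℂ)^m) • (derivative^[m] (X^k) * Rp p (n-1-m))

lemma Sp_identity (p : Polynomial ℂ) (n k : ℕ) (hk : k < n) :
    derivative (Sp p n k) - C 3 * X^2 * Sp p n k = X^k * Rp p n := by
  set a : ℕ → Polynomial ℂ := fun m => ((-1:ℂ)^m) • (derivative^[m] (X^k) * Rp p (n-m)) with ha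
  have key : derivative (Sp p n k) - C 3 * X^2 * Sp p n k
      = ∑ m ∈ Finset.range n, (a m - a (m+1)) := by
    unfold Sp
    rw [Polynomial.derivative_sum, Finset.mul_sum, ← Finset.sum_sub_distrib]
    refine Finset.sum_congr rfl fun m hm => ?_
    have hm' : m < n := Finset.mem_range.mp hm
    have h1 : n - 1 - m + 1 = n - m := by omega
    have h2 : n - (m+1) = n - 1 - m := by omega
    rw [Polynomial.derivative_smul, Polynomial.derivative_mul, ha]
    simp only [h2]
    have h3 : Rp p (n - m) = derivative (Rp p (n-1-m)) - C 3 * X^2 * Rp p (n-1-m) := by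
      rw [← h1]; rfl
    rw [h3]
    simp only [Function.iterate_succ_apply', Polynomial.smul_eq_C_mul, map_pow, map_neg,
      map_one, map_mul, pow_succ, mul_neg, mul_one, neg_neg]
    ring
  rw [key, Finset.sum_range_sub' a n, ha]
  have h0 : derivative^[n] (X^k : Polynomial ℂ) = 0 := by
    apply Polynomial.iterate_derivative_eq_zero
    simpa [Polynomial.natDegree_X_pow] using hk
  simp [h0]

lemma norm_exp_cube (a : ℂ) (ha : a^3 = 1) (t : ℝ) :
    ‖Complex.exp (-(a*t)^3)‖ = Real.exp (-t^3) := by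
  have e1 : -((a*(t:ℝ))^3) = (((-t^3 : ℝ)) : ℂ) := by
    rw [mul_pow, ha, one_mul]; push_cast; ring
  rw [e1, Complex.norm_exp, Complex.ofReal_re]

lemma norm_ofReal_mul (r : ℝ) (z : ℂ) : ‖(r:ℂ) * z‖ = |r| * ‖z‖ := by
  rw [norm_mul, Complex.norm_real, Real.norm_eq_abs]

lemma key_integral (s w : Polynomial ℂ) (hsw : derivative w - C 3 * X^2 * w = s)
    (a : ℂ) (ha : a^3 = 1) :
    ∫ t in Ioi (0:ℝ), a * (Complex.exp (-(a*t)^3) * s.eval (a*t))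
      = -(Complex.exp (-(0:ℂ)^3) * w.eval 0) := by
  set G : ℝ → ℂ := fun t => Complex.exp (-(a*t)^3) * w.eval (a*t) with hG
  have hderiv : ∀ t ∈ Ici (0:ℝ), HasDerivAt G
      (a * (Complex.exp (-(a*t)^3) * s.eval (a*t))) t := by
    intro t _
    have h1 : HasDerivAt (fun z : ℂ => Complex.exp (-z^3) * w.eval z)
        (Complex.exp (-(a*t)^3) * s.eval (a*t)) (a*t) := by
      have := hasDerivAt_ec w (a*t)
      rwa [hsw] at this
    have h2 : HasDerivAt (fun z : ℂ => a * z) a (t:ℂ) := by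
      simpa using (hasDerivAt_id (t:ℂ)).const_mul a
    have h3 := (h1.comp (t:ℂ) h2)
    have h4 := h3.comp_ofReal
    simpa [Function.comp, mul_comm] using h4
  have hnorm : Tendsto (fun t : ℝ => ‖(Real.exp (t - t^3) : ℂ) * s.eval (a * t)‖)
      atTop (𝓝 0) := by simpa using (tendsto_poly s a).norm
  have hO : (fun t : ℝ => a * (Complex.exp (-(a*t)^3) * s.eval (a*t)))
      =O[atTop] fun t => Real.exp (-1*t) := by
    rw [isBigO_iff]
    refine ⟨‖a‖, ?_⟩
    have hev := hnorm.eventually_le_const one_pos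
    filter_upwards [hev] with t h1
    rw [norm_ofReal_mul, abs_of_pos (Real.exp_pos _)] at h1
    rw [norm_mul, norm_mul, norm_exp_cube a ha t]
    have e2 : Real.exp (-t^3) = Real.exp (-1*t) * Real.exp (t - t^3) := by
      rw [← Real.exp_add]; ring_nf
    rw [e2, Real.norm_eq_abs, abs_of_pos (Real.exp_pos _)]
    have h5 : Real.exp (t - t^3) * ‖s.eval (a*t)‖ ≤ 1 := h1
    have h6 : (0:ℝ) < Real.exp (-1*t) := Real.exp_pos _
    calc ‖a‖ * (Real.exp (-1*t) * Real.exp (t - t^3) * ‖s.eval (a*t)‖)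
        = ‖a‖ * Real.exp (-1*t) * (Real.exp (t - t^3) * ‖s.eval (a*t)‖) := by ring
      _ ≤ ‖a‖ * Real.exp (-1*t) * 1 := by
          apply mul_le_mul_of_nonneg_left h5 (by positivity)
      _ = ‖a‖ * Real.exp (-1*t) := by ring
  have hcont : Continuous fun t : ℝ => a * (Complex.exp (-(a*t)^3) * s.eval (a*t)) := by
    apply continuous_const.mul
    apply Continuous.mul
    · exact Complex.continuous_exp.comp
        (((continuous_const.mul Complex.continuous_ofReal).pow 3).neg)
    · exact s.continuous_aeval.comp (continuous_const.mul Complex.continuous_ofReal)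
  have hint : IntegrableOn (fun t : ℝ => a * (Complex.exp (-(a*t)^3) * s.eval (a*t)))
      (Ioi (0:ℝ)) := by
    apply Iff.mp integrableOn_Ici_iff_integrableOn_Ioi
    exact ((hcont.continuousOn).locallyIntegrableOn measurableSet_Ici).integrableOn_of_isBigO_atTop
      hO ⟨Ioi 1, Ioi_mem_atTop 1, exp_neg_integrableOn_Ioi 1 one_pos⟩
  have hwn : Tendsto (fun t : ℝ => ‖(Real.exp (t - t^3) : ℂ) * w.eval (a * t)‖)
      atTop (𝓝 0) := by simpa using (tendsto_poly w a).norm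
  have hG0 : Tendsto G atTop (𝓝 0) := by
    apply squeeze_zero_norm' ?_ hwn
    filter_upwards [eventually_ge_atTop (0:ℝ)] with t ht
    simp only [hG, norm_mul, norm_exp_cube a ha t, Complex.norm_real, Real.norm_eq_abs,
      abs_of_pos (Real.exp_pos _)]
    have : Real.exp (-t^3) ≤ Real.exp (t - t^3) := Real.exp_le_exp.2 (by linarith)
    exact mul_le_mul_of_nonneg_right this (norm_nonneg _)
  have := integral_Ioi_of_hasDerivAt_of_tendsto'
    (f := G) (f' := fun t => a * (Complex.exp (-(a*t)^3) * s.eval (a*t))) hderiv hint hG0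
  rw [this, hG]
  norm_num



lemma both (p : Polynomial ℂ) (n k : ℕ) (hk : k < n) (a : ℂ) (ha : a^3 = 1) :
    I0 (fun x => x ^ k * Q n p x * Complex.exp (-x ^ 3)) +
      (-a * ∫ t in Set.Ioi (0:ℝ),
        (fun x => x ^ k * Q n p x * Complex.exp (-x ^ 3)) (a * t)) = 0 := by
  set s := X^k * Rp p n with hs
  set w := Sp p n k with hw
  have hsw : derivative w - C 3 * X^2 * w = s := Sp_identity p n k hk
  set c : ℂ := (-1)^n / 3^n with hc
  have hfeq : ∀ x : ℂ, x^k * Q n p x * Complex.exp (-x^3)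
      = c * (Complex.exp (-x^3) * s.eval x) := by
    intro x
    have h1 : Complex.exp (x^3) * Complex.exp (-x^3) = 1 := by
      rw [← Complex.exp_add]; simp
    simp only [Q, iteratedDeriv_eq, hs, Polynomial.eval_mul, Polynomial.eval_pow,
      Polynomial.eval_X, hc]
    linear_combination ((-1:ℂ)^n / 3^n * (Rp p n).eval x * x^k * Complex.exp (-x^3)) * h1
  have h10 := key_integral s w hsw 1 (one_pow 3)
  simp only [one_mul] at h10
  have hI0 : I0 (fun x => x ^ k * Q n p x * Complex.exp (-x ^ 3))
      = c * -(Complex.exp (-(0:ℂ)^3) * w.eval 0) := by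
    rw [I0]
    simp only [hfeq]
    rw [MeasureTheory.integral_const_mul, h10]
  have ha' := key_integral s w hsw a ha
  have haint : (∫ t in Set.Ioi (0:ℝ),
        (fun x => x ^ k * Q n p x * Complex.exp (-x ^ 3)) (a * t))
      = c * ∫ t in Set.Ioi (0:ℝ), Complex.exp (-(a*t)^3) * s.eval (a*t) := by
    simp only [hfeq]
    rw [MeasureTheory.integral_const_mul]
  rw [hI0, haint]
  have h2 : a * ∫ t in Set.Ioi (0:ℝ), Complex.exp (-(a*t)^3) * s.eval (a*t)
      = -(Complex.exp (-(0:ℂ)^3) * w.eval 0) := by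
    rw [← MeasureTheory.integral_const_mul]; exact ha'
  linear_combination -c * h2

/-- For every polynomial `p`, `n ∈ ℕ`, `j ∈ {1,2}` and `0 ≤ k ≤ n−1`,
`I₀(xᵏ Qₙ[p](x) e^{−x³}) + I_j(xᵏ Qₙ[p](x) e^{−x³}) = 0`: the polynomial `Qₙ[p]` is
orthogonal to `xᵏ`, `k = 0,…,n−1`, with respect to `e^{−x³}` on both `Γ₀ ∪ Γ₁`
and `Γ₀ ∪ Γ₂`. -/
theorem stmt4 (p : Polynomial ℂ) (n k : ℕ) (hk : k < n) :
    I0 (fun x => x ^ k * Q n p x * Complex.exp (-x ^ 3)) +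
      I1 (fun x => x ^ k * Q n p x * Complex.exp (-x ^ 3)) = 0 ∧
    I0 (fun x => x ^ k * Q n p x * Complex.exp (-x ^ 3)) +
      I2 (fun x => x ^ k * Q n p x * Complex.exp (-x ^ 3)) = 0 := by
  have hω3 : ω^3 = 1 := by
    rw [ω, ← Complex.exp_nat_mul]
    rw [show ((3:ℕ):ℂ) * (2 * Real.pi * Complex.I / 3) = 2 * Real.pi * Complex.I by
      push_cast; ring]
    exact Complex.exp_two_pi_mul_I
  have hω23 : (ω^2)^3 = 1 := by rw [← pow_mul, mul_comm 2 3, pow_mul, hω3, one_pow]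
  exact ⟨both p n k hk ω hω3, both p n k hk (ω^2) hω23⟩
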